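/- For the Shares/Hypercube algorithm on the triangle query with w workers, where each dimension of the output space is divided into w^{1/3} shares and each edge (u,v) of each relation is replicated to all w^{1/3} workers sharing its two bound coordinates, the expected total communication is Θ(w^{1/3}·IN) and the expected per-worker load is Θ(IN/w^{2/3}). -/

import Mathlib

section Helpers
open Finset

lemma fiber_card {V : Type*} [Fintype V] [DecidableEq V] {s : ℕ} (u : V) (a : Fin s) :
    (Finset.univ.filter fun f : V → Fin s => f u = a).card * s = s ^ Fintype.card V := by
  have key : ∀ b : Fin s, (Finset.univ.filter fun f : V → Fin s => f u = b).card
      = (Finset.univ.filter fun f : V → Fin s => f u = a).card := by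
    intro b
    apply Finset.card_bij' (fun f _ => Function.update f u a) (fun g _ => Function.update g u b)
    · intro f hf
      simp only [mem_filter, mem_univ, true_and] at hf
      rw [Function.update_idem, ← hf, Function.update_eq_self]
    · intro g hg
      simp only [mem_filter, mem_univ, true_and] at hg
      rw [Function.update_idem, ← hg, Function.update_eq_self]
    · intro f hf; simp
    · intro g hg; simp
  have h2 := Finset.card_eq_sum_card_fiberwise
    (f := fun f : V → Fin s => f u) (s := Finset.univ) (t := Finset.univ)
    (fun f _ => Finset.mem_univ _)
  simp only [key, Finset.sum_const, Finset.card_univ, Fintype.card_fin, smul_eq_mul,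
    Fintype.card_fun] at h2
  rw [mul_comm, ← h2]

section
variable {V : Type*} [Fintype V] [DecidableEq V] {s : ℕ}

-- counts over worker space
lemma countc1 (x y : Fin s) :
    (Finset.univ.filter fun c : Fin s × Fin s × Fin s => x = c.1 ∧ y = c.2.1).card = s := by
  have h : (Finset.univ.filter fun c : Fin s × Fin s × Fin s => x = c.1 ∧ y = c.2.1)
      = {x} ×ˢ ({y} ×ˢ Finset.univ) := by
    ext ⟨a,b,d⟩; simp [eq_comm, and_comm]
  simp [h]

lemma countc2 (x y : Fin s) :
    (Finset.univ.filter fun c : Fin s × Fin s × Fin s => x = c.2.1 ∧ y = c.2.2).card = s := by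
  have h : (Finset.univ.filter fun c : Fin s × Fin s × Fin s => x = c.2.1 ∧ y = c.2.2)
      = Finset.univ ×ˢ ({x} ×ˢ {y}) := by
    ext ⟨a,b,d⟩; simp [eq_comm, and_comm]
  simp [h]

lemma countc3 (x y : Fin s) :
    (Finset.univ.filter fun c : Fin s × Fin s × Fin s => x = c.2.2 ∧ y = c.1).card = s := by
  have h : (Finset.univ.filter fun c : Fin s × Fin s × Fin s => x = c.2.2 ∧ y = c.1)
      = {y} ×ˢ (Finset.univ ×ˢ {x}) := by
    ext ⟨a,b,d⟩; simp [eq_comm, and_comm]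
  simp [h]

-- counts over hash space
lemma counth1 (u v : V) (c : Fin s × Fin s × Fin s) :
    (Finset.univ.filter fun h : (V → Fin s) × (V → Fin s) × (V → Fin s) =>
        h.1 u = c.1 ∧ h.2.1 v = c.2.1).card * s ^ 2 = (s ^ Fintype.card V) ^ 3 := by
  have h : (Finset.univ.filter fun h : (V → Fin s) × (V → Fin s) × (V → Fin s) =>
        h.1 u = c.1 ∧ h.2.1 v = c.2.1)
      = (Finset.univ.filter fun f : V → Fin s => f u = c.1) ×ˢ
        ((Finset.univ.filter fun f : V → Fin s => f v = c.2.1) ×ˢ Finset.univ) := by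
    ext h; simp [Finset.mem_product]
  rw [h, Finset.card_product, Finset.card_product, Finset.card_univ, Fintype.card_fun,
    Fintype.card_fin]
  have e1 := fiber_card u c.1
  have e2 := fiber_card v c.2.1
  have key : ((Finset.univ.filter fun f : V → Fin s => f u = c.1).card *
      ((Finset.univ.filter fun f : V → Fin s => f v = c.2.1).card * s ^ Fintype.card V)) * s ^ 2
      = ((Finset.univ.filter fun f : V → Fin s => f u = c.1).card * s) *
        (((Finset.univ.filter fun f : V → Fin s => f v = c.2.1).card * s) * s ^ Fintype.card V) := by
    ring
  rw [key, e1, e2]; ring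

lemma counth2 (u v : V) (c : Fin s × Fin s × Fin s) :
    (Finset.univ.filter fun h : (V → Fin s) × (V → Fin s) × (V → Fin s) =>
        h.2.1 u = c.2.1 ∧ h.2.2 v = c.2.2).card * s ^ 2 = (s ^ Fintype.card V) ^ 3 := by
  have h : (Finset.univ.filter fun h : (V → Fin s) × (V → Fin s) × (V → Fin s) =>
        h.2.1 u = c.2.1 ∧ h.2.2 v = c.2.2)
      = Finset.univ ×ˢ ((Finset.univ.filter fun f : V → Fin s => f u = c.2.1) ×ˢ
        (Finset.univ.filter fun f : V → Fin s => f v = c.2.2)) := by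
    ext h; simp [Finset.mem_product]
  rw [h, Finset.card_product, Finset.card_product, Finset.card_univ, Fintype.card_fun,
    Fintype.card_fin]
  have e1 := fiber_card u c.2.1
  have e2 := fiber_card v c.2.2
  have key : (s ^ Fintype.card V * ((Finset.univ.filter fun f : V → Fin s => f u = c.2.1).card *
      (Finset.univ.filter fun f : V → Fin s => f v = c.2.2).card)) * s ^ 2
      = ((Finset.univ.filter fun f : V → Fin s => f u = c.2.1).card * s) *
        (((Finset.univ.filter fun f : V → Fin s => f v = c.2.2).card * s) * s ^ Fintype.card V) := by
    ring
  rw [key, e1, e2]; ring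

lemma counth3 (u v : V) (c : Fin s × Fin s × Fin s) :
    (Finset.univ.filter fun h : (V → Fin s) × (V → Fin s) × (V → Fin s) =>
        h.2.2 u = c.2.2 ∧ h.1 v = c.1).card * s ^ 2 = (s ^ Fintype.card V) ^ 3 := by
  have h : (Finset.univ.filter fun h : (V → Fin s) × (V → Fin s) × (V → Fin s) =>
        h.2.2 u = c.2.2 ∧ h.1 v = c.1)
      = (Finset.univ.filter fun f : V → Fin s => f v = c.1) ×ˢ
        (Finset.univ ×ˢ (Finset.univ.filter fun f : V → Fin s => f u = c.2.2)) := by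
    ext h; simp [Finset.mem_product, and_comm]
  rw [h, Finset.card_product, Finset.card_product, Finset.card_univ, Fintype.card_fun,
    Fintype.card_fin]
  have e1 := fiber_card v c.1
  have e2 := fiber_card u c.2.2
  have key : ((Finset.univ.filter fun f : V → Fin s => f v = c.1).card *
      (s ^ Fintype.card V * (Finset.univ.filter fun f : V → Fin s => f u = c.2.2).card)) * s ^ 2
      = ((Finset.univ.filter fun f : V → Fin s => f v = c.1).card * s) *
        (((Finset.univ.filter fun f : V → Fin s => f u = c.2.2).card * s) * s ^ Fintype.card V) := by
    ring
  rw [key, e1, e2]; ring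

end

end Helpers


/-- The number of tuples received by worker `c` of the `s × s × s` Hypercube for
the triangle query, under hash functions `h = (h₁, h₂, h₃)`: a tuple `(u,v)` of
relation `edge(aᵢ, aⱼ)` is sent to every worker whose `i`-th and `j`-th
coordinates match the hashed values. -/
def hcLoad {V : Type*} [DecidableEq V] (s : ℕ) (E₁ E₂ E₃ : Finset (V × V))
    (h : (V → Fin s) × (V → Fin s) × (V → Fin s))
    (c : Fin s × Fin s × Fin s) : ℕ :=
  (E₁.filter fun p => h.1 p.1 = c.1 ∧ h.2.1 p.2 = c.2.1).card +
  (E₂.filter fun p => h.2.1 p.1 = c.2.1 ∧ h.2.2 p.2 = c.2.2).card +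
  (E₃.filter fun p => h.2.2 p.1 = c.2.2 ∧ h.1 p.2 = c.1).card

/-- Shares/Hypercube for the triangle query with `w = s³` workers, each relation
of size `IN`: (i) for any hash functions the total communication is exactly
`3·IN·s = Θ(w^{1/3}·IN)`; (ii) for each worker, the expected load over
independent uniformly random hash functions `h₁, h₂, h₃` is exactly
`3·IN/s² = Θ(IN/w^{2/3})`. -/
theorem hypercube_triangle_costs {V : Type*} [Fintype V] [DecidableEq V]
    (s : ℕ) (hs : 0 < s) (E₁ E₂ E₃ : Finset (V × V)) (IN : ℕ)
    (h1 : E₁.card = IN) (h2 : E₂.card = IN) (h3 : E₃.card = IN) :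
    (∀ h : (V → Fin s) × (V → Fin s) × (V → Fin s),
        ∑ c : Fin s × Fin s × Fin s, hcLoad s E₁ E₂ E₃ h c = 3 * IN * s) ∧
    (∀ c : Fin s × Fin s × Fin s,
        (∑ h : (V → Fin s) × (V → Fin s) × (V → Fin s),
            (hcLoad s E₁ E₂ E₃ h c : ℝ))
          / (Fintype.card ((V → Fin s) × (V → Fin s) × (V → Fin s)) : ℝ)
          = 3 * IN / s ^ 2) := by
  constructor
  · intro h
    simp only [hcLoad, Finset.sum_add_distrib]
    have t1 : ∑ c : Fin s × Fin s × Fin s,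
        (E₁.filter fun p => h.1 p.1 = c.1 ∧ h.2.1 p.2 = c.2.1).card = IN * s := by
      simp only [Finset.card_filter]
      rw [Finset.sum_comm]
      have key : ∀ p ∈ E₁, (∑ c : Fin s × Fin s × Fin s,
          if h.1 p.1 = c.1 ∧ h.2.1 p.2 = c.2.1 then 1 else 0) = s := by
        intro p _
        rw [← Finset.card_filter]
        exact countc1 _ _
      rw [Finset.sum_congr rfl key, Finset.sum_const, h1, smul_eq_mul]
    have t2 : ∑ c : Fin s × Fin s × Fin s,
        (E₂.filter fun p => h.2.1 p.1 = c.2.1 ∧ h.2.2 p.2 = c.2.2).card = IN * s := by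
      simp only [Finset.card_filter]
      rw [Finset.sum_comm]
      have key : ∀ p ∈ E₂, (∑ c : Fin s × Fin s × Fin s,
          if h.2.1 p.1 = c.2.1 ∧ h.2.2 p.2 = c.2.2 then 1 else 0) = s := by
        intro p _
        rw [← Finset.card_filter]
        exact countc2 _ _
      rw [Finset.sum_congr rfl key, Finset.sum_const, h2, smul_eq_mul]
    have t3 : ∑ c : Fin s × Fin s × Fin s,
        (E₃.filter fun p => h.2.2 p.1 = c.2.2 ∧ h.1 p.2 = c.1).card = IN * s := by
      simp only [Finset.card_filter]
      rw [Finset.sum_comm]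
      have key : ∀ p ∈ E₃, (∑ c : Fin s × Fin s × Fin s,
          if h.2.2 p.1 = c.2.2 ∧ h.1 p.2 = c.1 then 1 else 0) = s := by
        intro p _
        rw [← Finset.card_filter]
        exact countc3 _ _
      rw [Finset.sum_congr rfl key, Finset.sum_const, h3, smul_eq_mul]
    rw [t1, t2, t3]; ring
  · intro c
    have hs' : (s : ℝ) ≠ 0 := Nat.cast_ne_zero.mpr hs.ne'
    have hN : (s : ℝ) ^ Fintype.card V ≠ 0 := pow_ne_zero _ hs'
    set K : ℝ := ((s : ℝ) ^ Fintype.card V) ^ 3 / s ^ 2 with hK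
    have cnt1 : ∀ u v : V, ((Finset.univ.filter
        fun h : (V → Fin s) × (V → Fin s) × (V → Fin s) =>
          h.1 u = c.1 ∧ h.2.1 v = c.2.1).card : ℝ) = K := by
      intro u v
      rw [hK, eq_div_iff (by positivity)]
      exact_mod_cast counth1 u v c
    have cnt2 : ∀ u v : V, ((Finset.univ.filter
        fun h : (V → Fin s) × (V → Fin s) × (V → Fin s) =>
          h.2.1 u = c.2.1 ∧ h.2.2 v = c.2.2).card : ℝ) = K := by
      intro u v
      rw [hK, eq_div_iff (by positivity)]
      exact_mod_cast counth2 u v c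
    have cnt3 : ∀ u v : V, ((Finset.univ.filter
        fun h : (V → Fin s) × (V → Fin s) × (V → Fin s) =>
          h.2.2 u = c.2.2 ∧ h.1 v = c.1).card : ℝ) = K := by
      intro u v
      rw [hK, eq_div_iff (by positivity)]
      exact_mod_cast counth3 u v c
    have num : (∑ h : (V → Fin s) × (V → Fin s) × (V → Fin s),
        (hcLoad s E₁ E₂ E₃ h c : ℝ)) = 3 * IN * K := by
      simp only [hcLoad, Nat.cast_add, Finset.sum_add_distrib, Finset.card_filter,
        Nat.cast_sum, Nat.cast_ite, Nat.cast_one, Nat.cast_zero]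
      rw [Finset.sum_comm, Finset.sum_comm (s := Finset.univ) (t := E₂),
        Finset.sum_comm (s := Finset.univ) (t := E₃)]
      have k1 : ∀ p ∈ E₁, (∑ h : (V → Fin s) × (V → Fin s) × (V → Fin s),
          if h.1 p.1 = c.1 ∧ h.2.1 p.2 = c.2.1 then (1:ℝ) else 0) = K := by
        intro p _
        rw [Finset.sum_boole]
        exact cnt1 p.1 p.2
      have k2 : ∀ p ∈ E₂, (∑ h : (V → Fin s) × (V → Fin s) × (V → Fin s),
          if h.2.1 p.1 = c.2.1 ∧ h.2.2 p.2 = c.2.2 then (1:ℝ) else 0) = K := by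
        intro p _
        rw [Finset.sum_boole]
        exact cnt2 p.1 p.2
      have k3 : ∀ p ∈ E₃, (∑ h : (V → Fin s) × (V → Fin s) × (V → Fin s),
          if h.2.2 p.1 = c.2.2 ∧ h.1 p.2 = c.1 then (1:ℝ) else 0) = K := by
        intro p _
        rw [Finset.sum_boole]
        exact cnt3 p.1 p.2
      rw [Finset.sum_congr rfl k1, Finset.sum_congr rfl k2, Finset.sum_congr rfl k3,
        Finset.sum_const, Finset.sum_const, Finset.sum_const, h1, h2, h3]
      simp [nsmul_eq_mul]; ring
    rw [num]
    have den : (Fintype.card ((V → Fin s) × (V → Fin s) × (V → Fin s)) : ℝ)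
        = ((s : ℝ) ^ Fintype.card V) ^ 3 := by
      simp [Fintype.card_prod, Fintype.card_fun]
      ring
    rw [den, hK]
    field_simp
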